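/- Let d ≥ 1 and a_1,...,a_n, b_1,...,b_n be nonnegative integers, and suppose d divides both a_i and b_i for a fixed index i. If a binomial B ∈ K[x_1,...,x_n,y_1,y_2] lies in the toric ideal I(V) of the parametrization x_k = u_k^d (k=1..n), y_1 = ∏_k u_k^{a_k}, y_2 = ∏_k u_k^{b_k}, then the polynomial obtained from B by substituting x_i = 1 lies in the toric ideal I(V̄) of the parametrization obtained by omitting the parameter u_i. Conversely, every binomial of I(V̄) arises this way from a binomial of I(V). -/

import Mathlib

set_option maxHeartbeats 1000000

open MvPolynomial

lemma prod_monomial_one' {ι σ K : Type*} [CommSemiring K] (s : Finset ι) (f : ι → (σ →₀ ℕ)) :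
    ∏ t ∈ s, (monomial (f t) (1:K)) = monomial (∑ t ∈ s, f t) 1 := by
  classical
  induction s using Finset.induction_on with
  | empty => simp [monomial_zero']
  | insert _ _ h ih => simp [Finset.prod_insert h, Finset.sum_insert h, ih, monomial_mul]

lemma prod_X_pow' {σ K : Type*} [CommSemiring K] [Fintype σ] (a : σ → ℕ) :
    (∏ k : σ, (X k : MvPolynomial σ K) ^ a k)
      = monomial (Finsupp.equivFunOnFinite.symm a) 1 := by
  classical
  simp only [X_pow_eq_monomial, prod_monomial_one']
  have : (∑ t : σ, Finsupp.single t (a t)) = Finsupp.equivFunOnFinite.symm a := by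
    ext t
    rw [Finsupp.finset_sum_apply]
    simp [Finsupp.single_apply, Finset.sum_ite_eq']
  rw [this]

/-- The weight (exponent-vector) of the image of a monomial. -/
noncomputable def Wgt {σ τ : Type*} (w : σ → (τ →₀ ℕ)) (α : σ →₀ ℕ) : τ →₀ ℕ :=
  α.sum fun s e => e • w s

lemma Wgt_apply {σ τ : Type*} [Fintype σ] (w : σ → (τ →₀ ℕ)) (α : σ →₀ ℕ) (t : τ) :
    Wgt w α t = ∑ s : σ, α s * w s t := by
  classical
  rw [Wgt, Finsupp.sum_fintype _ _ (by simp), Finsupp.finset_sum_apply]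
  simp [Finsupp.smul_apply]

lemma aeval_monomial_one' {σ τ K : Type*} [CommSemiring K] (w : σ → (τ →₀ ℕ)) (α : σ →₀ ℕ) :
    aeval (R := K) (fun s => monomial (w s) (1:K)) (monomial α (1:K)) = monomial (Wgt w α) 1 := by
  classical
  rw [aeval_monomial]
  simp only [map_one, one_mul, Finsupp.prod, monomial_pow, one_pow, prod_monomial_one']
  rw [Wgt, Finsupp.sum]

open MvPolynomial in
theorem stmt_8 (K : Type*) [Field K] (n d : ℕ) (hd : 0 < d) (a b : Fin n → ℕ)
    (i : Fin n) (hai : d ∣ a i) (hbi : d ∣ b i)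
    (φ : MvPolynomial (Fin n ⊕ Fin 2) K →ₐ[K] MvPolynomial (Fin n) K)
    (hφ : φ = aeval (Sum.elim (fun k => X k ^ d)
      (fun j => if j = 0 then ∏ k, X k ^ a k else ∏ k, X k ^ b k)))
    (ψ : MvPolynomial ({k : Fin n // k ≠ i} ⊕ Fin 2) K →ₐ[K]
        MvPolynomial {k : Fin n // k ≠ i} K)
    (hψ : ψ = aeval (Sum.elim (fun k => X k ^ d)
      (fun j => if j = 0 then ∏ k : {k : Fin n // k ≠ i}, X k ^ a k.1
                else ∏ k : {k : Fin n // k ≠ i}, X k ^ b k.1)))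
    (bar : MvPolynomial (Fin n ⊕ Fin 2) K →ₐ[K]
        MvPolynomial ({k : Fin n // k ≠ i} ⊕ Fin 2) K)
    (hbar : bar = aeval (Sum.elim
      (fun k => if h : k = i then 1 else X (Sum.inl ⟨k, h⟩))
      (fun j => X (Sum.inr j)))) :
    (∀ F : MvPolynomial (Fin n ⊕ Fin 2) K,
        (∃ α β, F = monomial α 1 - monomial β 1) →
        F ∈ RingHom.ker φ.toRingHom → bar F ∈ RingHom.ker ψ.toRingHom) ∧
    (∀ G : MvPolynomial ({k : Fin n // k ≠ i} ⊕ Fin 2) K,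
        (∃ α β, G = monomial α 1 - monomial β 1) →
        G ∈ RingHom.ker ψ.toRingHom →
        ∃ F : MvPolynomial (Fin n ⊕ Fin 2) K,
          (∃ α β, F = monomial α 1 - monomial β 1) ∧
          F ∈ RingHom.ker φ.toRingHom ∧ bar F = G) := by
  classical
  obtain ⟨a', ha'⟩ := hai
  obtain ⟨b', hb'⟩ := hbi
  -- weight functions
  set wφ : (Fin n ⊕ Fin 2) → (Fin n →₀ ℕ) := Sum.elim (fun k => Finsupp.single k d)
    (fun j => Finsupp.equivFunOnFinite.symm (if j = 0 then a else b)) with hwφ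
  set wψ : ({k : Fin n // k ≠ i} ⊕ Fin 2) → ({k : Fin n // k ≠ i} →₀ ℕ) :=
    Sum.elim (fun k => Finsupp.single k d)
      (fun j => Finsupp.equivFunOnFinite.symm
        (if j = 0 then (fun k : {k : Fin n // k ≠ i} => a k.1)
         else (fun k : {k : Fin n // k ≠ i} => b k.1))) with hwψ
  set wb : (Fin n ⊕ Fin 2) → (({k : Fin n // k ≠ i} ⊕ Fin 2) →₀ ℕ) :=
    Sum.elim (fun k => if h : k = i then 0 else Finsupp.single (Sum.inl ⟨k, h⟩) 1)
      (fun j => Finsupp.single (Sum.inr j) 1) with hwb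
  -- the images of monomials
  have phi_mono : ∀ γ : (Fin n ⊕ Fin 2) →₀ ℕ,
      φ (monomial γ 1) = monomial (Wgt wφ γ) 1 := by
    intro γ
    rw [hφ]
    have hfun : (Sum.elim (fun k => (X k : MvPolynomial (Fin n) K) ^ d)
        (fun j => if j = 0 then ∏ k, X k ^ a k else ∏ k, X k ^ b k))
        = fun s => monomial (wφ s) 1 := by
      funext s
      cases s with
      | inl k => simp [hwφ, X_pow_eq_monomial]
      | inr j =>
        by_cases hj : j = 0 <;> simp [hwφ, hj, prod_X_pow']
    rw [hfun]
    exact aeval_monomial_one' (K := K) wφ γ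
  have psi_mono : ∀ γ : ({k : Fin n // k ≠ i} ⊕ Fin 2) →₀ ℕ,
      ψ (monomial γ 1) = monomial (Wgt wψ γ) 1 := by
    intro γ
    rw [hψ]
    have hfun : (Sum.elim (fun k => (X k : MvPolynomial {k : Fin n // k ≠ i} K) ^ d)
        (fun j => if j = 0 then ∏ k : {k : Fin n // k ≠ i}, X k ^ a k.1
                  else ∏ k : {k : Fin n // k ≠ i}, X k ^ b k.1))
        = fun s => monomial (wψ s) 1 := by
      funext s
      cases s with
      | inl k => simp [hwψ, X_pow_eq_monomial]
      | inr j =>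
        by_cases hj : j = 0 <;> simp [hwψ, hj, prod_X_pow']
    rw [hfun]
    exact aeval_monomial_one' (K := K) wψ γ
  have bar_mono : ∀ γ : (Fin n ⊕ Fin 2) →₀ ℕ,
      bar (monomial γ 1) = monomial (Wgt wb γ) 1 := by
    intro γ
    rw [hbar]
    have hfun : (Sum.elim
        (fun k => if h : k = i then (1 : MvPolynomial ({k : Fin n // k ≠ i} ⊕ Fin 2) K)
                  else X (Sum.inl ⟨k, h⟩))
        (fun j => X (Sum.inr j)))
        = fun s => monomial (wb s) 1 := by
      funext s
      cases s with
      | inl k =>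
        by_cases h : k = i
        · simp [hwb, h, monomial_zero']
        · simp [hwb, h, X]
      | inr j => simp [hwb, X]
    rw [hfun]
    exact aeval_monomial_one' (K := K) wb γ
  -- explicit weight formulas
  have Wφ_apply : ∀ (γ : (Fin n ⊕ Fin 2) →₀ ℕ) (k : Fin n),
      Wgt wφ γ k = d * γ (Sum.inl k) + a k * γ (Sum.inr 0) + b k * γ (Sum.inr 1) := by
    intro γ k
    rw [Wgt_apply, Fintype.sum_sum_type]
    have h1 : ∑ j : Fin n, γ (Sum.inl j) * wφ (Sum.inl j) k = γ (Sum.inl k) * d := by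
      simp [hwφ, Finsupp.single_apply, mul_ite, Finset.sum_ite_eq']
    have h2 : ∑ j : Fin 2, γ (Sum.inr j) * wφ (Sum.inr j) k
        = γ (Sum.inr 0) * a k + γ (Sum.inr 1) * b k := by
      rw [Fin.sum_univ_two]
      simp [hwφ]
    rw [h1, h2]; ring
  have Wψ_apply : ∀ (γ : ({k : Fin n // k ≠ i} ⊕ Fin 2) →₀ ℕ) (k : {k : Fin n // k ≠ i}),
      Wgt wψ γ k = d * γ (Sum.inl k) + a k.1 * γ (Sum.inr 0) + b k.1 * γ (Sum.inr 1) := by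
    intro γ k
    rw [Wgt_apply, Fintype.sum_sum_type]
    have h1 : ∑ j : {k : Fin n // k ≠ i}, γ (Sum.inl j) * wψ (Sum.inl j) k
        = γ (Sum.inl k) * d := by
      simp [hwψ, Finsupp.single_apply, mul_ite, Finset.sum_ite_eq']
    have h2 : ∑ j : Fin 2, γ (Sum.inr j) * wψ (Sum.inr j) k
        = γ (Sum.inr 0) * a k.1 + γ (Sum.inr 1) * b k.1 := by
      rw [Fin.sum_univ_two]
      simp [hwψ]
    rw [h1, h2]; ring
  have Wb_inl : ∀ (γ : (Fin n ⊕ Fin 2) →₀ ℕ) (k : {k : Fin n // k ≠ i}),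
      Wgt wb γ (Sum.inl k) = γ (Sum.inl k.1) := by
    intro γ k
    rw [Wgt_apply, Fintype.sum_sum_type]
    have h2 : ∑ j : Fin 2, γ (Sum.inr j) * wb (Sum.inr j) (Sum.inl k) = 0 := by
      simp [hwb, Finsupp.single_apply]
    rw [h2, add_zero]
    rw [Finset.sum_eq_single k.1]
    · rw [hwb]
      simp only [Sum.elim_inl, dif_neg k.2]
      have : (⟨k.1, k.2⟩ : {k : Fin n // k ≠ i}) = k := rfl
      simp [Finsupp.single_apply, this]
    · intro j _ hj
      rw [hwb]
      simp only [Sum.elim_inl]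
      by_cases h : j = i
      · simp [h]
      · rw [dif_neg h]
        have : (Sum.inl (⟨j, h⟩ : {k : Fin n // k ≠ i}) :
            {k : Fin n // k ≠ i} ⊕ Fin 2) ≠ Sum.inl k := by
          simp only [ne_eq, Sum.inl.injEq]
          intro hc
          exact hj (congrArg Subtype.val hc)
        simp [Finsupp.single_apply, this]
    · intro h
      exact absurd (Finset.mem_univ k.1) h
  have Wb_inr : ∀ (γ : (Fin n ⊕ Fin 2) →₀ ℕ) (j : Fin 2),
      Wgt wb γ (Sum.inr j) = γ (Sum.inr j) := by
    intro γ j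
    rw [Wgt_apply, Fintype.sum_sum_type]
    have h1 : ∑ k : Fin n, γ (Sum.inl k) * wb (Sum.inl k) (Sum.inr j) = 0 := by
      apply Finset.sum_eq_zero
      intro k _
      rw [hwb]
      simp only [Sum.elim_inl]
      by_cases h : k = i
      · simp [h]
      · rw [dif_neg h]
        simp [Finsupp.single_apply]
    rw [h1, zero_add, Fin.sum_univ_two]
    rw [hwb]
    fin_cases j <;> simp [Finsupp.single_apply]
  have mono_inj : ∀ {τ : Type} [DecidableEq τ] (u v : τ →₀ ℕ),
      (monomial u (1:K)) = monomial v 1 → u = v := by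
    intro τ _ u v h
    exact monomial_left_injective (one_ne_zero) h
  constructor
  · -- forward direction
    rintro F ⟨α, β, rfl⟩ hF
    rw [RingHom.mem_ker] at hF ⊢
    simp only [AlgHom.toRingHom_eq_coe, RingHom.coe_coe] at hF ⊢
    rw [map_sub, phi_mono, phi_mono, sub_eq_zero] at hF
    have hW : Wgt wφ α = Wgt wφ β := mono_inj _ _ hF
    rw [map_sub, bar_mono, bar_mono, map_sub, psi_mono, psi_mono, sub_eq_zero]
    have heq : Wgt wψ (Wgt wb α) = Wgt wψ (Wgt wb β) := by
      ext k
      rw [Wψ_apply, Wψ_apply, Wb_inl, Wb_inl, Wb_inr, Wb_inr, Wb_inr, Wb_inr]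
      have := DFunLike.congr_fun hW k.1
      rw [Wφ_apply, Wφ_apply] at this
      omega
    rw [heq]
  · -- converse direction
    rintro G ⟨α, β, rfl⟩ hG
    rw [RingHom.mem_ker] at hG
    simp only [AlgHom.toRingHom_eq_coe, RingHom.coe_coe] at hG
    rw [map_sub, psi_mono, psi_mono, sub_eq_zero] at hG
    have hW : Wgt wψ α = Wgt wψ β := mono_inj _ _ hG
    set cα := a' * β (Sum.inr 0) + b' * β (Sum.inr 1) with hcα
    set cβ := a' * α (Sum.inr 0) + b' * α (Sum.inr 1) with hcβ
    set α' : (Fin n ⊕ Fin 2) →₀ ℕ := Finsupp.equivFunOnFinite.symm (Sum.elim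
      (fun k => if h : k = i then cα else α (Sum.inl ⟨k, h⟩))
      (fun j => α (Sum.inr j))) with hα'
    set β' : (Fin n ⊕ Fin 2) →₀ ℕ := Finsupp.equivFunOnFinite.symm (Sum.elim
      (fun k => if h : k = i then cβ else β (Sum.inl ⟨k, h⟩))
      (fun j => β (Sum.inr j))) with hβ'
    have hα'l : ∀ k, α' (Sum.inl k) = if h : k = i then cα else α (Sum.inl ⟨k, h⟩) := by
      intro k; simp [hα']
    have hα'r : ∀ j, α' (Sum.inr j) = α (Sum.inr j) := by
      intro j; simp [hα']
    have hβ'l : ∀ k, β' (Sum.inl k) = if h : k = i then cβ else β (Sum.inl ⟨k, h⟩) := by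
      intro k; simp [hβ']
    have hβ'r : ∀ j, β' (Sum.inr j) = β (Sum.inr j) := by
      intro j; simp [hβ']
    refine ⟨monomial α' 1 - monomial β' 1, ⟨α', β', rfl⟩, ?_, ?_⟩
    · rw [RingHom.mem_ker]
      simp only [AlgHom.toRingHom_eq_coe, RingHom.coe_coe]
      rw [map_sub, phi_mono, phi_mono, sub_eq_zero]
      have heq : Wgt wφ α' = Wgt wφ β' := by
        ext k
        rw [Wφ_apply, Wφ_apply, hα'l, hβ'l, hα'r, hα'r, hβ'r, hβ'r]
        by_cases h : k = i
        · subst h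
          rw [dif_pos rfl, dif_pos rfl, hcα, hcβ, ha', hb']
          ring
        · rw [dif_neg h, dif_neg h]
          have := DFunLike.congr_fun hW ⟨k, h⟩
          rw [Wψ_apply, Wψ_apply] at this
          simp only at this
          omega
      rw [heq]
    · rw [map_sub, bar_mono, bar_mono]
      have hwα : Wgt wb α' = α := by
        ext s
        cases s with
        | inl k =>
          rw [Wb_inl, hα'l, dif_neg k.2]
        | inr j =>
          rw [Wb_inr, hα'r]
      have hwβ : Wgt wb β' = β := by
        ext s
        cases s with
        | inl k =>
          rw [Wb_inl, hβ'l, dif_neg k.2]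
        | inr j =>
          rw [Wb_inr, hβ'r]
      rw [hwα, hwβ]
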